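/- If a triangle-free graph G admits a (2k+1)-[k]-coloring, then for every weight function d with weighted clique number ω, G admits a proper multicoloring with ⌈(2k+1)ω/(2k)⌉ colors. -/

import Mathlib

def IsMulticoloring {V : Type*} (G : SimpleGraph V) (d : V → ℕ) (n : ℕ)
    (f : V → Finset (Fin n)) : Prop :=
  (∀ v, d v ≤ (f v).card) ∧ ∀ ⦃u v⦄, G.Adj u v → Disjoint (f u) (f v)

namespace MC

def st (m n i : ℕ) : ℕ := (i * n + (m - 1)) / m
def blk (m n c : ℕ) : ℕ := c * m / n
def b (m n i : ℕ) : ℕ := st m n (i + 1) - st m n i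

lemma st_mono (m n : ℕ) {i j : ℕ} (h : i ≤ j) : st m n i ≤ st m n j :=
  Nat.div_le_div_right (by have := Nat.mul_le_mul_right n h; omega)

lemma st_zero (m n : ℕ) (hm : 0 < m) : st m n 0 = 0 := by
  simp [st, Nat.div_eq_of_lt (by omega : m - 1 < m)]

lemma st_top (m n : ℕ) (hm : 0 < m) : st m n m = n := by
  unfold st
  rw [mul_comm, add_comm, Nat.add_mul_div_right _ _ hm,
    Nat.div_eq_of_lt (by omega : m - 1 < m)]
  omega

lemma sum_b (m n : ℕ) (M : ℕ) :
    ∑ i ∈ Finset.range M, b m n i = st m n M - st m n 0 := by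
  induction M with
  | zero => simp
  | succ M ih =>
      rw [Finset.sum_range_succ, ih]
      have h1 : st m n M ≤ st m n (M + 1) := st_mono m n (Nat.le_succ M)
      have h0 : st m n 0 ≤ st m n M := st_mono m n (Nat.zero_le M)
      unfold b
      omega

lemma sum_b_top (m n : ℕ) (hm : 0 < m) : ∑ i ∈ Finset.range m, b m n i = n := by
  rw [sum_b m n m, st_top m n hm, st_zero m n hm]
  omega

lemma b_le (m n β : ℕ) (hm : 0 < m) (hβ : n ≤ m * β) (i : ℕ) : b m n i ≤ β := by
  unfold b
  have h2 : st m n i + β = (i * n + (m - 1) + β * m) / m := by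
    unfold st
    rw [Nat.add_mul_div_right _ _ hm]
  have h3 : st m n (i + 1) ≤ st m n i + β := by
    rw [h2]
    unfold st
    apply Nat.div_le_div_right
    have e1 : (i + 1) * n = i * n + n := by ring
    have e2 : m * β = β * m := mul_comm _ _
    omega
  omega

lemma blk_lt (m n c : ℕ) (hm : 0 < m) (hn : 0 < n) (hc : c < n) : blk m n c < m := by
  unfold blk
  rw [Nat.div_lt_iff_lt_mul hn]
  calc c * m < n * m := (Nat.mul_lt_mul_right hm).mpr hc
    _ = m * n := mul_comm _ _

lemma st_blk_le (m n c : ℕ) (hm : 0 < m) (hn : 0 < n) (hc : c < n) :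
    st m n (blk m n c) ≤ c := by
  have h1 : blk m n c * n ≤ c * m := Nat.div_mul_le_self _ _
  unfold st
  rw [Nat.div_le_iff_le_mul_add_pred hm]
  have : m * c = c * m := mul_comm _ _
  omega

lemma lt_st_blk_succ (m n c : ℕ) (hm : 0 < m) (hn : 0 < n) (hc : c < n) :
    c < st m n (blk m n c + 1) := by
  have h1 := Nat.div_add_mod (c * m) n
  have h2 : c * m % n < n := Nat.mod_lt _ hn
  have h3 : c + 1 ≤ st m n (blk m n c + 1) := by
    unfold st
    rw [Nat.le_div_iff_mul_le hm]
    unfold blk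
    have e1 : (c + 1) * m = c * m + m := by ring
    have e2 : (c * m / n + 1) * n = n * (c * m / n) + n := by ring
    omega
  omega


def A (m n : ℕ) (S : Finset ℕ) (j : ℕ) : ℕ :=
  if j ∈ S then ∑ i ∈ S.filter (· < j), b m n i
  else (∑ i ∈ S, b m n i) + ∑ i ∈ (Finset.range m).filter (fun i => i ∉ S ∧ j < i), b m n i

def pos (m n : ℕ) (S : Finset ℕ) (c : ℕ) : ℕ :=
  A m n S (blk m n c) +
    (if blk m n c ∈ S then c - st m n (blk m n c) else st m n (blk m n c + 1) - 1 - c)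

-- structural lemmas about A
lemma A_mem_add_b_le {S : Finset ℕ} {j : ℕ} (m n : ℕ) (hj : j ∈ S) :
    A m n S j + b m n j ≤ ∑ i ∈ S, b m n i := by
  unfold A
  rw [if_pos hj]
  have hnj : j ∉ S.filter (· < j) := by simp
  have h1 : ∑ i ∈ insert j (S.filter (· < j)), b m n i
      = b m n j + ∑ i ∈ S.filter (· < j), b m n i := Finset.sum_insert hnj
  have h2 : insert j (S.filter (· < j)) ⊆ S := by
    intro i hi
    rcases Finset.mem_insert.mp hi with rfl | hi
    · exact hj
    · exact (Finset.mem_filter.mp hi).1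
  have := Finset.sum_le_sum_of_subset (f := b m n) h2
  omega

lemma A_mem_mem {S : Finset ℕ} {j j' : ℕ} (m n : ℕ) (hj : j ∈ S) (hj' : j' ∈ S)
    (hlt : j < j') : A m n S j + b m n j ≤ A m n S j' := by
  unfold A
  rw [if_pos hj, if_pos hj']
  have hnj : j ∉ S.filter (· < j) := by simp
  have h1 : ∑ i ∈ insert j (S.filter (· < j)), b m n i
      = b m n j + ∑ i ∈ S.filter (· < j), b m n i := Finset.sum_insert hnj
  have h2 : insert j (S.filter (· < j)) ⊆ S.filter (· < j') := by
    intro i hi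
    rcases Finset.mem_insert.mp hi with rfl | hi
    · simp [hj, hlt]
    · simp only [Finset.mem_filter] at hi ⊢
      exact ⟨hi.1, by omega⟩
  have := Finset.sum_le_sum_of_subset (f := b m n) h2
  omega

lemma A_not_not {S : Finset ℕ} {j j' : ℕ} (m n : ℕ) (hj : j ∉ S) (hj' : j' ∉ S)
    (hj'm : j' < m) (hlt : j < j') : A m n S j' + b m n j' ≤ A m n S j := by
  unfold A
  rw [if_neg hj, if_neg hj']
  have hnj : j' ∉ (Finset.range m).filter (fun i => i ∉ S ∧ j' < i) := by simp
  have h1 : ∑ i ∈ insert j' ((Finset.range m).filter (fun i => i ∉ S ∧ j' < i)), b m n i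
      = b m n j' + ∑ i ∈ (Finset.range m).filter (fun i => i ∉ S ∧ j' < i), b m n i :=
    Finset.sum_insert hnj
  have h2 : insert j' ((Finset.range m).filter (fun i => i ∉ S ∧ j' < i))
      ⊆ (Finset.range m).filter (fun i => i ∉ S ∧ j < i) := by
    intro i hi
    rcases Finset.mem_insert.mp hi with rfl | hi
    · simp only [Finset.mem_filter, Finset.mem_range]
      exact ⟨hj'm, hj', hlt⟩
    · simp only [Finset.mem_filter, Finset.mem_range] at hi ⊢
      exact ⟨hi.1, hi.2.1, by omega⟩
  have := Finset.sum_le_sum_of_subset (f := b m n) h2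
  omega

lemma A_mem_not {S : Finset ℕ} {j j' : ℕ} (m n : ℕ) (hj : j ∈ S) (hj' : j' ∉ S) :
    A m n S j + b m n j ≤ A m n S j' := by
  have h1 := A_mem_add_b_le m n hj
  unfold A at h1 ⊢
  rw [if_pos hj] at h1
  rw [if_pos hj, if_neg hj']
  omega

lemma sep {S : Finset ℕ} {j j' : ℕ} (m n : ℕ) (hjm : j < m) (hj'm : j' < m)
    (hne : j ≠ j') :
    A m n S j + b m n j ≤ A m n S j' ∨ A m n S j' + b m n j' ≤ A m n S j := by
  by_cases h1 : j ∈ S <;> by_cases h2 : j' ∈ S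
  · rcases lt_or_gt_of_ne hne with h | h
    · exact Or.inl (A_mem_mem m n h1 h2 h)
    · exact Or.inr (A_mem_mem m n h2 h1 h)
  · exact Or.inl (A_mem_not m n h1 h2)
  · exact Or.inr (A_mem_not m n h2 h1)
  · rcases lt_or_gt_of_ne hne with h | h
    · exact Or.inr (A_not_not m n h1 h2 hj'm h)
    · exact Or.inl (A_not_not m n h2 h1 hjm h)


-- pos interval bounds
lemma pos_bounds {S : Finset ℕ} {c : ℕ} (m n : ℕ) (hm : 0 < m) (hn : 0 < n) (hc : c < n) :
    A m n S (blk m n c) ≤ pos m n S c ∧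
    pos m n S c < A m n S (blk m n c) + b m n (blk m n c) := by
  have h1 := st_blk_le m n c hm hn hc
  have h2 := lt_st_blk_succ m n c hm hn hc
  have hb : b m n (blk m n c) = st m n (blk m n c + 1) - st m n (blk m n c) := rfl
  unfold pos
  split <;> omega

lemma A_add_b_le_n {S : Finset ℕ} {j : ℕ} (m n : ℕ) (hm : 0 < m)
    (hS : S ⊆ Finset.range m) (hjm : j < m) : A m n S j + b m n j ≤ n := by
  by_cases hj : j ∈ S
  · have h1 := A_mem_add_b_le m n hj
    have h2 := Finset.sum_le_sum_of_subset (f := b m n) hS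
    rw [sum_b_top m n hm] at h2
    omega
  · rw [A, if_neg hj]
    have hsub : insert j ((Finset.range m).filter (fun i => i ∉ S ∧ j < i)) ∪ S
        ⊆ Finset.range m := by
      intro i hi
      rcases Finset.mem_union.mp hi with hi | hi
      · rcases Finset.mem_insert.mp hi with rfl | hi
        · exact Finset.mem_range.mpr hjm
        · exact (Finset.mem_filter.mp hi).1
      · exact hS hi
    have hd : Disjoint (insert j ((Finset.range m).filter (fun i => i ∉ S ∧ j < i))) S := by
      rw [Finset.disjoint_left]
      intro i hi his
      rcases Finset.mem_insert.mp hi with rfl | hi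
      · exact hj his
      · exact (Finset.mem_filter.mp hi).2.1 his
    have hnj : j ∉ (Finset.range m).filter (fun i => i ∉ S ∧ j < i) := by simp
    have h3 := Finset.sum_le_sum_of_subset (f := b m n) hsub
    rw [Finset.sum_union hd, Finset.sum_insert hnj, sum_b_top m n hm] at h3
    omega

lemma pos_lt_n {S : Finset ℕ} {c : ℕ} (m n : ℕ) (hm : 0 < m) (hn : 0 < n)
    (hS : S ⊆ Finset.range m) (hc : c < n) : pos m n S c < n := by
  have h1 := pos_bounds (S := S) m n hm hn hc
  have h2 := A_add_b_le_n m n hm hS (blk_lt m n c hm hn hc)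
  omega

lemma pos_injOn {S : Finset ℕ} (m n : ℕ) (hm : 0 < m) (hn : 0 < n)
    (hS : S ⊆ Finset.range m) {c c' : ℕ} (hc : c < n) (hc' : c' < n)
    (h : pos m n S c = pos m n S c') : c = c' := by
  by_cases hb : blk m n c = blk m n c'
  · have h1 := st_blk_le m n c hm hn hc
    have h2 := lt_st_blk_succ m n c hm hn hc
    have h3 := st_blk_le m n c' hm hn hc'
    have h4 := lt_st_blk_succ m n c' hm hn hc'
    rw [hb] at h1 h2
    unfold pos at h
    rw [hb] at h
    split at h <;> omega
  · exfalso
    have hb1 := pos_bounds (S := S) m n hm hn hc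
    have hb2 := pos_bounds (S := S) m n hm hn hc'
    rcases sep (S := S) m n (blk_lt m n c hm hn hc) (blk_lt m n c' hm hn hc') hb with hs | hs <;> omega

lemma card_filter_pos {S : Finset ℕ} {t : ℕ} (m n : ℕ) (hm : 0 < m) (hn : 0 < n)
    (hS : S ⊆ Finset.range m) (ht : t ≤ n) :
    ((Finset.range n).filter (fun c => pos m n S c < t)).card = t := by
  have hinj : Set.InjOn (pos m n S) (Finset.range n) := by
    intro c hc c' hc' h
    exact pos_injOn m n hm hn hS (Finset.mem_range.mp hc) (Finset.mem_range.mp hc') h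
  have himg : (Finset.range n).image (pos m n S) = Finset.range n := by
    apply Finset.eq_of_subset_of_card_le
    · intro y hy
      obtain ⟨c, hc, rfl⟩ := Finset.mem_image.mp hy
      exact Finset.mem_range.mpr (pos_lt_n m n hm hn hS (Finset.mem_range.mp hc))
    · rw [Finset.card_image_of_injOn hinj]
  have himg2 : ((Finset.range n).filter (fun c => pos m n S c < t)).image (pos m n S)
      = Finset.range t := by
    ext y
    simp only [Finset.mem_image, Finset.mem_filter, Finset.mem_range]
    constructor
    · rintro ⟨c, ⟨_, hct⟩, rfl⟩
      exact hct
    · intro hy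
      have hy' : y ∈ Finset.range n := Finset.mem_range.mpr (lt_of_lt_of_le hy ht)
      rw [← himg] at hy'
      obtain ⟨c, hc, rfl⟩ := Finset.mem_image.mp hy'
      exact ⟨c, ⟨Finset.mem_range.mp hc, hy⟩, rfl⟩
  have hinj2 : Set.InjOn (pos m n S)
      ((Finset.range n).filter (fun c => pos m n S c < t)) :=
    hinj.mono (Finset.coe_subset.mpr (Finset.filter_subset _ _))
  rw [← Finset.card_image_of_injOn hinj2, himg2, Finset.card_range]


lemma sum_union_le' (s t : Finset ℕ) (f : ℕ → ℕ) :
    ∑ i ∈ s ∪ t, f i ≤ ∑ i ∈ s, f i + ∑ i ∈ t, f i := by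
  have := Finset.sum_union_inter (s₁ := s) (s₂ := t) (f := f)
  omega

lemma sum_insert_le' (a : ℕ) (s : Finset ℕ) (f : ℕ → ℕ) :
    ∑ i ∈ insert a s, f i ≤ f a + ∑ i ∈ s, f i := by
  rw [Finset.insert_eq]
  have := sum_union_le' {a} s f
  simpa using this

lemma sum_card_le_one {s : Finset ℕ} {β m n : ℕ} (hcard : s.card ≤ 1)
    (hb : ∀ i, b m n i ≤ β) : ∑ i ∈ s, b m n i ≤ β := by
  interval_cases h : s.card
  · rw [Finset.card_eq_zero.mp h]
    simp
  · obtain ⟨x, rfl⟩ := Finset.card_eq_one.mp h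
    simpa using hb x

lemma key_mem {S T : Finset ℕ} {c β : ℕ} (m n : ℕ) (hm : 0 < m) (hn : 0 < n)
    (hST : Disjoint S T) (hsd : ((Finset.range m) \ (S ∪ T)).card ≤ 1)
    (hb : ∀ i, b m n i ≤ β) (hc : c < n) (hjS : blk m n c ∈ S) :
    n ≤ pos m n S c + pos m n T c + 1 + β := by
  set j := blk m n c with hj
  have hjT : j ∉ T := Finset.disjoint_left.mp hST hjS
  have h1 := st_blk_le m n c hm hn hc
  have h2 := lt_st_blk_succ m n c hm hn hc
  have hjm := blk_lt m n c hm hn hc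
  have hbj : b m n j = st m n (j + 1) - st m n j := rfl
  have eS : pos m n S c = (∑ i ∈ S.filter (· < j), b m n i) + (c - st m n j) := by
    simp only [pos, A, if_pos hjS, ← hj]
  have eT : pos m n T c = ((∑ i ∈ T, b m n i) +
      ∑ i ∈ (Finset.range m).filter (fun i => i ∉ T ∧ j < i), b m n i) +
      (st m n (j + 1) - 1 - c) := by
    simp only [pos, A, if_neg hjT, ← hj]
  have hcover : Finset.range m ⊆ (S.filter (· < j)) ∪ (T ∪
      (((Finset.range m).filter (fun i => i ∉ T ∧ j < i)) ∪
        insert j ((Finset.range m) \ (S ∪ T)))) := by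
    intro i hi
    simp only [Finset.mem_union, Finset.mem_filter, Finset.mem_insert, Finset.mem_sdiff]
    by_cases hiT : i ∈ T
    · tauto
    by_cases hij : i = j
    · tauto
    by_cases hji : j < i
    · exact Or.inr (Or.inr (Or.inl ⟨hi, hiT, hji⟩))
    by_cases hiS : i ∈ S
    · exact Or.inl ⟨hiS, by omega⟩
    · refine Or.inr (Or.inr (Or.inr (Or.inr ⟨hi, ?_⟩)))
      simp [hiS, hiT]
  have hsum : n ≤ (∑ i ∈ S.filter (· < j), b m n i) + ((∑ i ∈ T, b m n i) +
      ((∑ i ∈ (Finset.range m).filter (fun i => i ∉ T ∧ j < i), b m n i) +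
        ∑ i ∈ insert j ((Finset.range m) \ (S ∪ T)), b m n i)) := by
    calc n = ∑ i ∈ Finset.range m, b m n i := (sum_b_top m n hm).symm
      _ ≤ _ := Finset.sum_le_sum_of_subset hcover
      _ ≤ _ := by
          refine le_trans (sum_union_le' _ _ _) ?_
          gcongr
          refine le_trans (sum_union_le' _ _ _) ?_
          gcongr
          exact sum_union_le' _ _ _
  have hins : ∑ i ∈ insert j ((Finset.range m) \ (S ∪ T)), b m n i
      ≤ b m n j + ∑ i ∈ (Finset.range m) \ (S ∪ T), b m n i := sum_insert_le' _ _ _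
  have hsd2 : ∑ i ∈ (Finset.range m) \ (S ∪ T), b m n i ≤ β := sum_card_le_one hsd hb
  omega

lemma key_not {S T : Finset ℕ} {c β : ℕ} (m n : ℕ) (hm : 0 < m) (hn : 0 < n)
    (hsd : ((Finset.range m) \ (S ∪ T)).card ≤ 1)
    (hb : ∀ i, b m n i ≤ β) (hc : c < n)
    (hjS : blk m n c ∉ S) (hjT : blk m n c ∉ T) :
    n ≤ pos m n S c + pos m n T c + 1 + β := by
  set j := blk m n c with hj
  have eS : (∑ i ∈ S, b m n i) ≤ pos m n S c := by
    simp only [pos, A, if_neg hjS, ← hj]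
    omega
  have eT : (∑ i ∈ T, b m n i) ≤ pos m n T c := by
    simp only [pos, A, if_neg hjT, ← hj]
    omega
  have hcover : Finset.range m ⊆ S ∪ (T ∪ ((Finset.range m) \ (S ∪ T))) := by
    intro i hi
    simp only [Finset.mem_union, Finset.mem_sdiff]
    by_cases hiS : i ∈ S
    · tauto
    by_cases hiT : i ∈ T
    · tauto
    · exact Or.inr (Or.inr ⟨hi, by simp [hiS, hiT]⟩)
  have hsum : n ≤ (∑ i ∈ S, b m n i) + ((∑ i ∈ T, b m n i) +
      ∑ i ∈ (Finset.range m) \ (S ∪ T), b m n i) := by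
    calc n = ∑ i ∈ Finset.range m, b m n i := (sum_b_top m n hm).symm
      _ ≤ _ := Finset.sum_le_sum_of_subset hcover
      _ ≤ _ := by
          refine le_trans (sum_union_le' _ _ _) ?_
          gcongr
          exact sum_union_le' _ _ _
  have hsd2 : ∑ i ∈ (Finset.range m) \ (S ∪ T), b m n i ≤ β := sum_card_le_one hsd hb
  omega

lemma key {S T : Finset ℕ} {c β : ℕ} (m n : ℕ) (hm : 0 < m) (hn : 0 < n)
    (hST : Disjoint S T) (hsd : ((Finset.range m) \ (S ∪ T)).card ≤ 1)
    (hb : ∀ i, b m n i ≤ β) (hc : c < n) :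
    n ≤ pos m n S c + pos m n T c + 1 + β := by
  by_cases h1 : blk m n c ∈ S
  · exact key_mem m n hm hn hST hsd hb hc h1
  by_cases h2 : blk m n c ∈ T
  · have hsd' : ((Finset.range m) \ (T ∪ S)).card ≤ 1 := by rwa [Finset.union_comm]
    have := key_mem m n hm hn hST.symm hsd' hb hc h2
    omega
  · exact key_not m n hm hn hsd hb hc h1 h2

end MC

lemma rat_ceil_eq (q : ℚ) : q.ceil = ⌈q⌉ := by
  symm
  rw [Rat.ceil]
  split
  · next h =>
      have hq : ((q.num : ℚ)) = q := by
        conv_rhs => rw [← Rat.num_div_den q]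
        rw [h]
        simp
      conv_lhs => rw [← hq]
      rw [Int.ceil_intCast]
  · next h =>
      have hfl : ⌊q⌋ = q.num / (q.den : ℤ) := Rat.floor_def q
      have hlt : (⌊q⌋ : ℚ) < q := by
        rcases eq_or_lt_of_le (Int.floor_le q) with heq | hlt
        · exfalso
          apply h
          have : q = ((⌊q⌋ : ℤ) : ℚ) := heq.symm
          rw [this]
          exact Rat.den_intCast _
        · exact hlt
      have hub := Int.lt_floor_add_one q
      rw [Int.ceil_eq_iff]
      constructor
      · rw [← hfl]
        push_cast
        linarith
      · rw [← hfl]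
        push_cast
        linarith

lemma ceil_eq (k ω β : ℕ) (hk : 0 < k) (h1 : ω ≤ 2 * k * β) (h2 : 2 * k * β < ω + 2 * k) :
    (((2 * k + 1) * ω : ℚ) / (2 * k) : ℚ).ceil.toNat = ω + β := by
  rw [rat_ceil_eq]
  have hkQ : (0:ℚ) < 2 * (k:ℚ) := by
    have : (0:ℚ) < (k:ℚ) := by exact_mod_cast hk
    linarith
  have h1Q : (ω:ℚ) ≤ 2 * (k:ℚ) * (β:ℚ) := by exact_mod_cast h1
  have h2Q : 2 * (k:ℚ) * (β:ℚ) < (ω:ℚ) + 2 * (k:ℚ) := by exact_mod_cast h2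
  have hceil : ⌈(((2 * k + 1) * ω : ℚ) / (2 * k) : ℚ)⌉ = ((ω + β : ℕ) : ℤ) := by
    rw [Int.ceil_eq_iff]
    constructor
    · rw [lt_div_iff₀ hkQ]
      push_cast
      nlinarith [h1Q, h2Q]
    · rw [div_le_iff₀ hkQ]
      push_cast
      nlinarith [h1Q, h2Q]
  rw [hceil, Int.toNat_natCast]

/-- A (2k+1)-[k]-colorable triangle-free graph admits, for every weight function of
weighted clique number ω, a proper multicoloring with ⌈(2k+1)ω/(2k)⌉ colors. -/
theorem multicoloring_from_kColoring {V : Type*} (G : SimpleGraph V)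
    (htf : G.CliqueFree 3) (k : ℕ) (hk : 0 < k)
    (hcol : ∃ f : V → Finset (Fin (2 * k + 1)),
        (∀ v, (f v).card = k) ∧ ∀ ⦃u v⦄, G.Adj u v → Disjoint (f u) (f v))
    (d : V → ℕ) (ω : ℕ)
    (hv : ∀ v, d v ≤ ω) (he : ∀ ⦃u v⦄, G.Adj u v → d u + d v ≤ ω) :
    ∃ f : V → Finset (Fin (((2 * k + 1) * ω : ℚ) / (2 * k) : ℚ).ceil.toNat),
      IsMulticoloring G d _ f := by
  classical
  obtain ⟨g, hgcard, hgadj⟩ := hcol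
  by_cases hω : ω = 0
  · refine ⟨fun _ => ∅, ?_, ?_⟩
    · intro v
      have := hv v
      simp only [Finset.card_empty]
      omega
    · intro u v _
      simp
  · have hk2 : 0 < 2 * k := by omega
    have hdm := Nat.div_add_mod (ω + 2 * k - 1) (2 * k)
    have hmod : (ω + 2 * k - 1) % (2 * k) < 2 * k := Nat.mod_lt _ hk2
    obtain ⟨β, hβdef⟩ : ∃ x, (ω + 2 * k - 1) / (2 * k) = x := ⟨_, rfl⟩
    rw [hβdef] at hdm
    have h1 : ω ≤ 2 * k * β := by omega
    have h2 : 2 * k * β < ω + 2 * k := by omega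
    have hNval' : (((2 * k + 1) * ω : ℚ) / (2 * k) : ℚ).ceil.toNat = ω + β :=
      ceil_eq k ω β hk h1 h2
    obtain ⟨N, hNdef⟩ : ∃ x, (((2 * k + 1) * ω : ℚ) / (2 * k) : ℚ).ceil.toNat = x := ⟨_, rfl⟩
    rw [hNdef] at hNval'
    have hNval : N = ω + β := hNval'
    rw [hNdef]
    have hm : 0 < 2 * k + 1 := by omega
    have hn : 0 < N := by omega
    have hmβ : N ≤ (2 * k + 1) * β := by
      have e : (2 * k + 1) * β = 2 * k * β + β := by ring
      omega
    have hbβ : ∀ i, MC.b (2 * k + 1) N i ≤ β := MC.b_le _ _ _ hm hmβ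
    set S : V → Finset ℕ := fun v => (g v).image Fin.val with hSdef
    have hScard : ∀ v, (S v).card = k := by
      intro v
      simp only [hSdef]
      rw [Finset.card_image_of_injective _ Fin.val_injective, hgcard]
    have hSsub : ∀ v, S v ⊆ Finset.range (2 * k + 1) := by
      intro v i hi
      simp only [hSdef, Finset.mem_image] at hi
      obtain ⟨x, _, rfl⟩ := hi
      exact Finset.mem_range.mpr x.isLt
    have hSdisj : ∀ ⦃u v⦄, G.Adj u v → Disjoint (S u) (S v) := by
      intro u v huv
      exact (Finset.disjoint_image Fin.val_injective).mpr (hgadj huv)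
    have hsd : ∀ ⦃u v⦄, G.Adj u v →
        ((Finset.range (2 * k + 1)) \ (S u ∪ S v)).card ≤ 1 := by
      intro u v huv
      have hsub : S u ∪ S v ⊆ Finset.range (2 * k + 1) :=
        Finset.union_subset (hSsub u) (hSsub v)
      rw [Finset.card_sdiff_of_subset hsub, Finset.card_union_of_disjoint (hSdisj huv),
        hScard, hScard, Finset.card_range]
      omega
    refine ⟨fun v => Finset.univ.filter (fun c => MC.pos (2 * k + 1) N (S v) c.val < d v),
      ?_, ?_⟩
    · intro v
      have hdv : d v ≤ N := by
        have := hv v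
        omega
      have hcount := MC.card_filter_pos (2 * k + 1) N hm hn (hSsub v) hdv
      have hbij : (Finset.range N).filter (fun c => MC.pos (2 * k + 1) N (S v) c < d v)
          = (Finset.univ.filter
              (fun c : Fin N => MC.pos (2 * k + 1) N (S v) c.val < d v)).image Fin.val := by
        ext c
        simp only [Finset.mem_filter, Finset.mem_range, Finset.mem_image, Finset.mem_univ,
          true_and]
        constructor
        · rintro ⟨hc, hp⟩
          exact ⟨⟨c, hc⟩, hp, rfl⟩
        · rintro ⟨x, hp, rfl⟩
          exact ⟨x.isLt, hp⟩
      rw [hbij, Finset.card_image_of_injective _ Fin.val_injective] at hcount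
      exact le_of_eq hcount.symm
    · intro u v huv
      rw [Finset.disjoint_left]
      intro c hcu hcv
      simp only [Finset.mem_filter, Finset.mem_univ, true_and] at hcu hcv
      have hkey := MC.key (2 * k + 1) N hm hn (hSdisj huv) (hsd huv) hbβ c.isLt
      have hedge := he huv
      omega
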